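/- arXiv:0804.0453 — 3 statements merged into one kernel-verified Lean document; each statement's English description precedes it below -/
import Mathlib

section
/- Let N ∈ 𝒩 and α > 0. Then t ↦ N(t^α)/t is non-decreasing on (0,∞) if and only if t ↦ N^∧(t)^{1/α}/t is non-increasing on (0,∞). -/
open MeasureTheory Filter Set Metric
open scoped ENNReal NNReal Topology

noncomputable section

/-- The class 𝒩 of continuous increasing functions mapping ℝ₊ onto ℝ₊. -/
structure MemN (N : ℝ → ℝ) : Prop where
  contOn : ContinuousOn N (Ici 0)
  strictMonoOn : StrictMonoOn N (Ici 0)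
  mapsTo : MapsTo N (Ici 0) (Ici 0)
  surjOn : SurjOn N (Ici 0) (Ici 0)

/-- A Young function: convex, increasing, vanishing at 0. -/
structure IsYoung (N : ℝ → ℝ) : Prop where
  convexOn : ConvexOn ℝ (Ici 0) N
  strictMonoOn : StrictMonoOn N (Ici 0)
  zero : N 0 = 0

/-- The (generalized) inverse `N⁻¹` of `N : ℝ₊ → ℝ₊`. -/
def ninv (N : ℝ → ℝ) (y : ℝ) : ℝ := sInf {t : ℝ | 0 ≤ t ∧ y ≤ N t}

/-- The adjoint function `N^∧(t) = 1 / N⁻¹(1/t)`. -/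
def nwedge (N : ℝ → ℝ) (t : ℝ) : ℝ := 1 / ninv N (1 / t)

variable {Ω : Type*}

/-- The class ℱ of functions which are Lipschitz on every ball. -/
def LipschitzOnBalls [PseudoMetricSpace Ω] (f : Ω → ℝ) : Prop :=
  ∀ (x : Ω) (r : ℝ), ∃ K : ℝ≥0, LipschitzOnWith K f (Metric.ball x r)

/-- The modulus of the gradient `|∇f|(x)` (equal to 0 at isolated points). -/
def gradNorm [PseudoMetricSpace Ω] (f : Ω → ℝ) (x : Ω) : ℝ :=
  limsup (fun y => |f y - f x| / dist y x) (𝓝[≠] x)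

/-- `‖ |∇f| ‖_{L_q(μ)}`. -/
def gradLqNorm [PseudoMetricSpace Ω] [MeasurableSpace Ω] (μ : Measure Ω) (q : ℝ≥0∞)
    (f : Ω → ℝ) : ℝ≥0∞ :=
  eLpNorm (gradNorm f) q μ

/-- The Orlicz (quasi-)norm `‖f‖_{N(μ)}`. -/
def orliczNorm [MeasurableSpace Ω] (μ : Measure Ω) (N : ℝ → ℝ) (f : Ω → ℝ) : ℝ :=
  sInf {v : ℝ | 0 < v ∧ ∫⁻ x, ENNReal.ofReal (N (|f x| / v)) ∂μ ≤ 1}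

/-- The dual norm `‖f‖_{N(μ)*}`. -/
def dualOrliczNorm [MeasurableSpace Ω] (μ : Measure Ω) (N : ℝ → ℝ) (f : Ω → ℝ) : ℝ :=
  sSup {r : ℝ | ∃ g : Ω → ℝ, orliczNorm μ N g ≤ 1 ∧ r = ∫ x, f x * g x ∂μ}

/-- The weak Orlicz quasi-norm `‖f‖_{N(μ),∞} = sup_{t>0} N^∧(μ{|f|≥t})·t`. -/
def weakOrliczNorm [MeasurableSpace Ω] (μ : Measure Ω) (N : ℝ → ℝ) (f : Ω → ℝ) : ℝ :=
  sSup {r : ℝ | ∃ t : ℝ, 0 < t ∧ r = nwedge N ((μ {x | t ≤ |f x|}).toReal) * t}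

/-- `m` is a median of `f` under `μ`. -/
def IsMedian [MeasurableSpace Ω] (μ : Measure Ω) (f : Ω → ℝ) (m : ℝ) : Prop :=
  (1 / 2 : ℝ≥0∞) ≤ μ {x | m ≤ f x} ∧ (1 / 2 : ℝ≥0∞) ≤ μ {x | f x ≤ m}

/-- Minkowski's exterior boundary measure `μ⁺(A)`. -/
def boundaryMeasure [PseudoMetricSpace Ω] [MeasurableSpace Ω] (μ : Measure Ω) (A : Set Ω) :
    ℝ≥0∞ :=
  liminf (fun ε : ℝ => (μ (Metric.thickening ε A) - μ A) / ENNReal.ofReal ε) (𝓝[>] (0 : ℝ))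

/-- The isoperimetric profile `I(t)`: the maximal function with `μ⁺(A) ≥ I(μ(A))`. -/
def isoProfile [PseudoMetricSpace Ω] [MeasurableSpace Ω] (μ : Measure Ω) (t : ℝ) : ℝ≥0∞ :=
  ⨅ (A : Set Ω) (_ : MeasurableSet A) (_ : μ A = ENNReal.ofReal t), boundaryMeasure μ A

/-- `Ĩ(t) = min(I(t), I(1-t))`. -/
def tildeIsoProfile [PseudoMetricSpace Ω] [MeasurableSpace Ω] (μ : Measure Ω) (t : ℝ) : ℝ≥0∞ :=
  min (isoProfile μ t) (isoProfile μ (1 - t))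

/-- The `q`-capacity `Cap_q(a,b)`. -/
def capacity [PseudoMetricSpace Ω] [MeasurableSpace Ω] (μ : Measure Ω) (q a b : ℝ) : ℝ≥0∞ :=
  ⨅ (Φ : Ω → ℝ) (_ : LipschitzOnBalls Φ) (_ : ∀ x, Φ x ∈ Icc (0 : ℝ) 1)
    (_ : ENNReal.ofReal a ≤ μ {x | Φ x = 1}) (_ : ENNReal.ofReal (1 - b) ≤ μ {x | Φ x = 0}),
    gradLqNorm μ (ENNReal.ofReal q) Φ

/-- A log-concave function (of the form exp(-ψ) with ψ convex, ℝ ∪ {+∞} valued). -/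
def IsLogConcaveFn {E : Type*} [AddCommGroup E] [Module ℝ E] (f : E → ℝ) : Prop :=
  (∀ x, 0 ≤ f x) ∧
    ∀ x y : E, ∀ a b : ℝ, 0 ≤ a → 0 ≤ b → a + b = 1 → f x ^ a * f y ^ b ≤ f (a • x + b • y)

/-- An absolutely continuous log-concave measure on Euclidean space. -/
def IsLogConcaveMeasure {n : ℕ} (μ : Measure (EuclideanSpace ℝ (Fin n))) : Prop :=
  ∃ f : EuclideanSpace ℝ (Fin n) → ℝ, IsLogConcaveFn f ∧
    μ = volume.withDensity fun x => ENNReal.ofReal (f x)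

lemma memN_zero' (N : ℝ → ℝ) (hmono : StrictMonoOn N (Ici 0))
    (hmaps : MapsTo N (Ici 0) (Ici 0)) (hsurj : SurjOn N (Ici 0) (Ici 0)) : N 0 = 0 := by
  obtain ⟨u, hu, hNu⟩ := hsurj (self_mem_Ici)
  have h0 : (0:ℝ) ≤ N 0 := hmaps self_mem_Ici
  simp only [mem_Ici] at hu
  rcases eq_or_lt_of_le hu with h | h
  · rw [← h] at hNu; linarith
  · have := hmono self_mem_Ici (le_of_lt h) h
    linarith

lemma ninv_eq' (N : ℝ → ℝ) (hmono : StrictMonoOn N (Ici 0))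
    (hmaps : MapsTo N (Ici 0) (Ici 0)) (hsurj : SurjOn N (Ici 0) (Ici 0))
    {y : ℝ} (hy : 0 < y) :
    ∃ u, 0 < u ∧ N u = y ∧ ninv N y = u := by
  obtain ⟨u, hu, hNu⟩ := hsurj (mem_Ici.mpr hy.le)
  simp only [mem_Ici] at hu
  have hz : N 0 = 0 := memN_zero' N hmono hmaps hsurj
  have hupos : 0 < u := by
    rcases eq_or_lt_of_le hu with h | h
    · exfalso; rw [← h, hz] at hNu; linarith
    · exact h
  refine ⟨u, hupos, hNu, ?_⟩
  have hset : {t : ℝ | 0 ≤ t ∧ y ≤ N t} = Ici u := by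
    ext t
    simp only [mem_setOf_eq, mem_Ici]
    constructor
    · rintro ⟨ht0, hyt⟩
      rw [← hNu] at hyt
      exact (hmono.le_iff_le (mem_Ici.mpr hu) (mem_Ici.mpr ht0)).mp hyt
    · intro hut
      refine ⟨hu.trans hut, ?_⟩
      rw [← hNu]
      exact hmono.monotoneOn (mem_Ici.mpr hu) (mem_Ici.mpr (hu.trans hut)) hut
  unfold ninv
  rw [hset, csInf_Ici]

/-- For `N ∈ 𝒩` and `α > 0`: `t ↦ N(t^α)/t` is non-decreasing on `(0,∞)`
iff `t ↦ N^∧(t)^{1/α}/t` is non-increasing on `(0,∞)`. -/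
theorem nwedge_monotonicity_duality (N : ℝ → ℝ) (hN : MemN N) (α : ℝ) (hα : 0 < α) :
    MonotoneOn (fun t => N (t ^ α) / t) (Ioi (0 : ℝ)) ↔
      AntitoneOn (fun t => nwedge N t ^ (1 / α) / t) (Ioi (0 : ℝ)) := by
  have hz : N 0 = 0 := memN_zero' N hN.strictMonoOn hN.mapsTo hN.surjOn
  have hα' : α ≠ 0 := ne_of_gt hα
  constructor
  · intro hf a ha b hb hab
    simp only [mem_Ioi] at ha hb
    obtain ⟨u, hu, hNu, hiu⟩ := ninv_eq' N hN.strictMonoOn hN.mapsTo hN.surjOn (one_div_pos.mpr ha)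
    obtain ⟨v, hv, hNv, hiv⟩ := ninv_eq' N hN.strictMonoOn hN.mapsTo hN.surjOn (one_div_pos.mpr hb)
    have hvu : v ≤ u := by
      by_contra h
      push_neg at h
      have h2 := hN.strictMonoOn (mem_Ici.mpr hu.le) (mem_Ici.mpr hv.le) h
      rw [hNu, hNv] at h2
      have h3 : 1 / b ≤ 1 / a := one_div_le_one_div_of_le ha hab
      linarith
    set x := u ^ (1/α) with hxdef
    set y := v ^ (1/α) with hydef
    have hx : 0 < x := Real.rpow_pos_of_pos hu _
    have hy : 0 < y := Real.rpow_pos_of_pos hv _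
    have hxy : y ≤ x := Real.rpow_le_rpow hv.le hvu (by positivity)
    have hxu : x ^ α = u := by
      rw [hxdef, one_div, Real.rpow_inv_rpow hu.le hα']
    have hyv : y ^ α = v := by
      rw [hydef, one_div, Real.rpow_inv_rpow hv.le hα']
    have hf' := hf (mem_Ioi.mpr hy) (mem_Ioi.mpr hx) hxy
    simp only at hf'
    rw [hxu, hyv, hNu, hNv] at hf'
    -- hf' : 1/b / y ≤ 1/a / x
    have eu : (1/u) ^ (1/α) = x⁻¹ := by
      rw [one_div u, Real.inv_rpow hu.le]
    have ev : (1/v) ^ (1/α) = y⁻¹ := by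
      rw [one_div v, Real.inv_rpow hv.le]
    simp only [nwedge, hiu, hiv, eu, ev]
    -- goal : y⁻¹ / b ≤ x⁻¹ / a
    rw [div_le_div_iff₀ hb ha]
    rw [div_le_div_iff₀ hy hx] at hf'
    have hax : x * a ≤ y * b := by
      have h2 := mul_le_mul_of_nonneg_left hf' (mul_pos ha hb).le
      have e : a * b * (1 / b * x) = x * a := by field_simp
      have e' : a * b * (1 / a * y) = y * b := by field_simp
      rw [e, e'] at h2
      exact h2
    have h3 := mul_le_mul_of_nonneg_left hax (by positivity : (0:ℝ) ≤ x⁻¹ * y⁻¹)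
    have e : x⁻¹ * y⁻¹ * (x * a) = y⁻¹ * a := by field_simp
    have e' : x⁻¹ * y⁻¹ * (y * b) = x⁻¹ * b := by field_simp
    rw [e, e'] at h3
    exact h3
  · intro hg s hs t ht hst
    simp only [mem_Ioi] at hs ht
    set u := t ^ α with hudef
    set v := s ^ α with hvdef
    have hu : 0 < u := Real.rpow_pos_of_pos ht _
    have hv : 0 < v := Real.rpow_pos_of_pos hs _
    have hNv : 0 < N v := by rw [← hz]; exact hN.strictMonoOn self_mem_Ici (mem_Ici.mpr hv.le) hv
    have hNu : 0 < N u := by rw [← hz]; exact hN.strictMonoOn self_mem_Ici (mem_Ici.mpr hu.le) hu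
    have hvu : v ≤ u := Real.rpow_le_rpow hs.le hst hα.le
    have hNvu : N v ≤ N u := hN.strictMonoOn.monotoneOn (mem_Ici.mpr hv.le) (mem_Ici.mpr hu.le) hvu
    set a := 1 / N u with hadef
    set b := 1 / N v with hbdef
    have hapos : 0 < a := one_div_pos.mpr hNu
    have hbpos : 0 < b := one_div_pos.mpr hNv
    have hab : a ≤ b := one_div_le_one_div_of_le hNv hNvu
    have hia : ninv N (1 / a) = u := by
      obtain ⟨w, hw, hNw, hiw⟩ := ninv_eq' N hN.strictMonoOn hN.mapsTo hN.surjOn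
        (show (0:ℝ) < 1 / a from one_div_pos.mpr hapos)
      have h1a : (1:ℝ) / a = N u := by rw [hadef, one_div_one_div]
      rw [hiw]
      rw [h1a] at hNw
      exact (hN.strictMonoOn.injOn (mem_Ici.mpr hw.le) (mem_Ici.mpr hu.le) hNw)
    have hib : ninv N (1 / b) = v := by
      obtain ⟨w, hw, hNw, hiw⟩ := ninv_eq' N hN.strictMonoOn hN.mapsTo hN.surjOn
        (show (0:ℝ) < 1 / b from one_div_pos.mpr hbpos)
      have h1b : (1:ℝ) / b = N v := by rw [hbdef, one_div_one_div]
      rw [hiw]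
      rw [h1b] at hNw
      exact (hN.strictMonoOn.injOn (mem_Ici.mpr hw.le) (mem_Ici.mpr hv.le) hNw)
    have hg' := hg (mem_Ioi.mpr hapos) (mem_Ioi.mpr hbpos) hab
    have hus : (1/u) ^ (1/α) = t⁻¹ := by
      rw [one_div u, Real.inv_rpow hu.le, hudef, one_div, Real.rpow_rpow_inv ht.le hα']
    have hvs : (1/v) ^ (1/α) = s⁻¹ := by
      rw [one_div v, Real.inv_rpow hv.le, hvdef, one_div, Real.rpow_rpow_inv hs.le hα']
    simp only [nwedge, hia, hib, hus, hvs] at hg'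
    -- hg' : s⁻¹ / b ≤ t⁻¹ / a ; goal : N (s^α)/s ≤ N (t^α)/t
    show N v / s ≤ N u / t
    rw [div_le_div_iff₀ hs ht]
    rw [div_le_div_iff₀ hbpos hapos] at hg'
    -- hg' : s⁻¹ * a ≤ t⁻¹ * b
    have h1 : s⁻¹ * a * (s * N u) ≤ t⁻¹ * b * (s * N u) :=
      mul_le_mul_of_nonneg_right hg' (by positivity)
    have e1 : s⁻¹ * a * (s * N u) = 1 := by
      rw [hadef]; field_simp
    have e2 : t⁻¹ * b * (s * N u) = s * N u / (t * N v) := by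
      rw [hbdef]; field_simp
    rw [e1, e2, le_div_iff₀ (by positivity), one_mul] at h1
    linarith [h1]


end
end

section
/- Let (Ω,d,μ) be a metric probability space, N ∈ 𝒩, 1 ≤ q < ∞ and D > 0. If the weak-type Orlicz-Sobolev inequality D·‖f − M_μ f‖_{N(μ),∞} ≤ ‖|∇f|‖_{L_q(μ)} holds for all f ∈ ℱ (for every median M_μ f of f), then Cap_q(t,1/2) ≥ D·N^∧(t) for all t ∈ [0,1/2]. -/
open MeasureTheory Filter Set Metric
open scoped ENNReal NNReal Topology

noncomputable section

variable {Ω : Type*}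

lemma MemN.zero {N : ℝ → ℝ} (hN : MemN N) : N 0 = 0 := by
  by_contra h0
  have hN0 : 0 < N 0 := lt_of_le_of_ne (hN.mapsTo (mem_Ici.2 le_rfl)) (by tauto)
  obtain ⟨t, ht, hNt⟩ := hN.surjOn (show N 0 / 2 ∈ Ici (0 : ℝ) by
    simp [le_of_lt (half_pos hN0)])
  have : N 0 ≤ N t := by
    rcases eq_or_lt_of_le (mem_Ici.1 ht) with h | h
    · exact le_of_eq (congrArg N h)
    · exact (hN.strictMonoOn (mem_Ici.2 le_rfl) ht h).le
  rw [hNt] at this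
  linarith

lemma ninv_nonneg (N : ℝ → ℝ) (y : ℝ) : 0 ≤ ninv N y :=
  Real.sInf_nonneg fun _ hx => hx.1

lemma ninv_set_nonempty {N : ℝ → ℝ} (hN : MemN N) {y : ℝ} (hy : 0 ≤ y) :
    {t : ℝ | 0 ≤ t ∧ y ≤ N t}.Nonempty := by
  obtain ⟨t, ht, hNt⟩ := hN.surjOn (mem_Ici.2 hy)
  exact ⟨t, mem_Ici.1 ht, hNt.ge⟩

lemma ninv_pos {N : ℝ → ℝ} (hN : MemN N) {y : ℝ} (hy : 0 < y) : 0 < ninv N y := by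
  have hc : ContinuousWithinAt N (Ici 0) 0 := hN.contOn 0 (mem_Ici.2 le_rfl)
  have hev : ∀ᶠ x in 𝓝[Ici 0] 0, N x < y := by
    have := hc.eventually_lt_const (by rw [hN.zero]; exact hy)
    exact this
  rw [eventually_iff, Metric.mem_nhdsWithin_iff] at hev
  obtain ⟨ε, hε, hball⟩ := hev
  refine lt_of_lt_of_le (half_pos hε) (le_csInf (ninv_set_nonempty hN hy.le) ?_)
  intro b hb
  by_contra hlt
  push_neg at hlt
  have hb2 : b ∈ ball (0 : ℝ) ε := by
    rw [Metric.mem_ball, Real.dist_eq, sub_zero, abs_of_nonneg hb.1]; linarith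
  exact absurd hb.2 (not_le.2 (hball ⟨hb2, hb.1⟩))

lemma ninv_mono {N : ℝ → ℝ} (hN : MemN N) {y₁ y₂ : ℝ} (h2 : 0 ≤ y₂) (h12 : y₁ ≤ y₂) :
    ninv N y₁ ≤ ninv N y₂ :=
  csInf_le_csInf ⟨0, fun _ hx => hx.1⟩ (ninv_set_nonempty hN h2)
    fun _ hx => ⟨hx.1, h12.trans hx.2⟩

lemma nwedge_nonneg (N : ℝ → ℝ) (t : ℝ) : 0 ≤ nwedge N t :=
  one_div_nonneg.2 (ninv_nonneg N _)

lemma nwedge_zero {N : ℝ → ℝ} (hN : MemN N) : nwedge N 0 = 0 := by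
  have : ninv N (1 / 0) = 0 := by
    rw [one_div, inv_zero]
    refine le_antisymm (csInf_le ⟨0, fun _ hx => hx.1⟩ ⟨le_rfl, hN.zero.ge⟩)
      (ninv_nonneg N 0)
  rw [nwedge, this, div_zero]

lemma nwedge_mono {N : ℝ → ℝ} (hN : MemN N) {s t : ℝ} (hs : 0 ≤ s) (hst : s ≤ t) :
    nwedge N s ≤ nwedge N t := by
  rcases eq_or_lt_of_le hs with h | h
  · rw [← h, nwedge_zero hN]; exact nwedge_nonneg N t
  · have ht : 0 < t := h.trans_le hst
    have h1 : ninv N (1 / t) ≤ ninv N (1 / s) :=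
      ninv_mono hN (by positivity) (one_div_le_one_div_of_le h hst)
    exact one_div_le_one_div_of_le (ninv_pos hN (by positivity)) h1

/-- A weak-type Orlicz–Sobolev inequality
`D·‖f − M_μ f‖_{N(μ),∞} ≤ ‖|∇f|‖_{L_q(μ)}` implies `Cap_q(t,1/2) ≥ D·N^∧(t)` on `[0,1/2]`. -/
theorem weak_orlicz_sobolev_implies_cap {Ω : Type*} [MetricSpace Ω]
    [TopologicalSpace.SeparableSpace Ω] [MeasurableSpace Ω] [BorelSpace Ω]
    (μ : Measure Ω) [IsProbabilityMeasure μ] (hnd : ∀ x : Ω, μ {x} ≠ 1)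
    (N : ℝ → ℝ) (hN : MemN N) (q : ℝ) (hq : 1 ≤ q) (D : ℝ) (hD : 0 < D)
    (h : ∀ f : Ω → ℝ, LipschitzOnBalls f → ∀ m : ℝ, IsMedian μ f m →
      ENNReal.ofReal (D * weakOrliczNorm μ N fun x => f x - m) ≤
        gradLqNorm μ (ENNReal.ofReal q) f) :
    ∀ t ∈ Icc (0 : ℝ) (1 / 2), ENNReal.ofReal (D * nwedge N t) ≤ capacity μ q t (1 / 2) := by
  intro t ht
  refine le_iInf fun Φ => le_iInf fun hLip => le_iInf fun hIcc => le_iInf fun h1 =>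
    le_iInf fun h0 => ?_
  have half_eq : (ENNReal.ofReal (1 - 1 / 2) : ℝ≥0∞) = 1 / 2 := by
    rw [show (1 : ℝ) - 1 / 2 = 1 / 2 by norm_num]
    rw [ENNReal.ofReal_div_of_pos two_pos, ENNReal.ofReal_one, ENNReal.ofReal_ofNat]
  have hmed : IsMedian μ Φ 0 := by
    constructor
    · have huniv : {x | (0 : ℝ) ≤ Φ x} = univ := eq_univ_of_forall fun x => (hIcc x).1
      rw [huniv, measure_univ]
      exact ENNReal.half_le_self
    · calc (1 / 2 : ℝ≥0∞) = ENNReal.ofReal (1 - 1 / 2) := half_eq.symm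
        _ ≤ μ {x | Φ x = 0} := h0
        _ ≤ μ {x | Φ x ≤ 0} := measure_mono fun x hx => le_of_eq hx
  have hkey := h Φ hLip 0 hmed
  simp only [sub_zero] at hkey
  refine le_trans ?_ hkey
  refine ENNReal.ofReal_le_ofReal (mul_le_mul_of_nonneg_left ?_ hD.le)
  -- it remains to show `nwedge N t ≤ weakOrliczNorm μ N Φ`
  set s₀ : ℝ := (μ {x | 1 ≤ |Φ x|}).toReal with hs₀
  have hsub : {x | Φ x = 1} ⊆ {x | 1 ≤ |Φ x|} := fun x hx => by
    simp only [mem_setOf_eq] at hx ⊢; rw [hx]; simp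
  have hts : t ≤ s₀ := by
    rw [hs₀, ← ENNReal.ofReal_le_iff_le_toReal (measure_ne_top μ _)]
    exact le_trans h1 (measure_mono hsub)
  have hmem : nwedge N s₀ * 1 ∈
      {r : ℝ | ∃ u : ℝ, 0 < u ∧ r = nwedge N ((μ {x | u ≤ |Φ x|}).toReal) * u} :=
    ⟨1, one_pos, rfl⟩
  have habs : ∀ x, |Φ x| = Φ x := fun x => abs_of_nonneg (hIcc x).1
  have hbdd : BddAbove
      {r : ℝ | ∃ u : ℝ, 0 < u ∧ r = nwedge N ((μ {x | u ≤ |Φ x|}).toReal) * u} := by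
    refine ⟨nwedge N 1, fun r hr => ?_⟩
    obtain ⟨u, hu, rfl⟩ := hr
    rcases le_or_gt u 1 with hu1 | hu1
    · have hμ1 : (μ {x | u ≤ |Φ x|}).toReal ≤ 1 := by
        rw [← ENNReal.toReal_one]
        exact ENNReal.toReal_mono ENNReal.one_ne_top prob_le_one
      calc nwedge N ((μ {x | u ≤ |Φ x|}).toReal) * u
          ≤ nwedge N 1 * 1 :=
            mul_le_mul (nwedge_mono hN ENNReal.toReal_nonneg hμ1) hu1 hu.le
              (nwedge_nonneg N 1)
        _ = nwedge N 1 := mul_one _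
    · have hempty : {x | u ≤ |Φ x|} = ∅ := by
        ext x
        simp only [mem_setOf_eq, mem_empty_iff_false, iff_false, not_le, habs x]
        exact lt_of_le_of_lt (hIcc x).2 hu1
      rw [hempty, measure_empty]
      simp [nwedge_zero hN, nwedge_nonneg N 1]
  calc nwedge N t ≤ nwedge N s₀ := nwedge_mono hN ht.1 hts
    _ = nwedge N s₀ * 1 := (mul_one _).symm
    _ ≤ weakOrliczNorm μ N Φ := le_csSup hbdd hmem

end
end

section
/- Let (Ω,d,μ) be a metric probability space, 1 ≤ q < ∞, and let N ∈ 𝒩 be such that t ↦ N(t)^{1/q}/t is non-decreasing on (0,∞). The following are equivalent: (1) D₁·‖f − M_μ f‖_{N(μ)} ≤ ‖|∇f|‖_{L_q(μ)} for all f ∈ ℱ; (2) Cap_q(t,1/2) ≥ D₂·N^∧(t) for all t ∈ [0,1/2]. Quantitatively: if (1) holds with constant D₁ then (2) holds with D₂ = D₁, and if (2) holds with constant D₂ then (1) holds with constant D₂/4; in particular the best constants satisfy D₁ ≤ D₂ ≤ 4 D₁. -/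
open MeasureTheory Filter Set Metric
open scoped ENNReal NNReal Topology

noncomputable section

variable {Ω : Type*}

/-! ### Auxiliary lemmas -/

namespace MemN

variable {N : ℝ → ℝ}

lemma nonneg (hN : MemN N) {t : ℝ} (ht : 0 ≤ t) : 0 ≤ N t := hN.mapsTo ht

lemma mono (hN : MemN N) : MonotoneOn N (Ici 0) := hN.strictMonoOn.monotoneOn

lemma zero_s6 (hN : MemN N) : N 0 = 0 := by
  have h0 : (0:ℝ) ≤ N 0 := hN.nonneg le_rfl
  obtain ⟨s, hs, hNs⟩ := hN.surjOn (show N 0 / 2 ∈ Ici (0:ℝ) from mem_Ici.mpr (by positivity))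
  have h1 : N 0 ≤ N s := hN.mono (self_mem_Ici) hs hs
  rw [hNs] at h1
  linarith

/-- `ninv` is a genuine right inverse on nonnegative reals. -/
lemma ninv_spec (hN : MemN N) {y : ℝ} (hy : 0 ≤ y) :
    0 ≤ ninv N y ∧ N (ninv N y) = y := by
  obtain ⟨s₀, hs₀, hNs₀⟩ := hN.surjOn (show y ∈ Ici (0:ℝ) from hy)
  have hmem : s₀ ∈ {t : ℝ | 0 ≤ t ∧ y ≤ N t} := ⟨hs₀, hNs₀.ge⟩
  have hlb : ∀ t ∈ {t : ℝ | 0 ≤ t ∧ y ≤ N t}, s₀ ≤ t := by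
    intro t ht
    by_contra hlt
    push_neg at hlt
    have := hN.strictMonoOn ht.1 hs₀ hlt
    rw [hNs₀] at this
    exact absurd (ht.2.trans_lt this) (lt_irrefl y)
  have : ninv N y = s₀ :=
    le_antisymm (csInf_le ⟨s₀, hlb⟩ hmem) (le_csInf ⟨s₀, hmem⟩ hlb)
  rw [this]; exact ⟨hs₀, hNs₀⟩

lemma ninv_nonneg (hN : MemN N) {y : ℝ} (hy : 0 ≤ y) : 0 ≤ ninv N y :=
  (hN.ninv_spec hy).1

lemma ninv_pos (hN : MemN N) {y : ℝ} (hy : 0 < y) : 0 < ninv N y := by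
  rcases (hN.ninv_spec hy.le) with ⟨h0, hinv⟩
  rcases h0.eq_or_lt with h | h
  · exfalso; rw [← h, hN.zero_s6] at hinv; exact hy.ne hinv
  · exact h

lemma nwedge_nonneg (hN : MemN N) {t : ℝ} (ht : 0 ≤ t) : 0 ≤ nwedge N t := by
  have : 0 ≤ ninv N (1 / t) := hN.ninv_nonneg (by positivity)
  exact div_nonneg one_pos.le this

lemma nwedge_zero (hN : MemN N) : nwedge N 0 = 0 := by
  have h : ninv N (1 / (0:ℝ)) = 0 := by
    rw [div_zero]
    have := hN.ninv_spec (le_refl (0:ℝ))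
    rcases this with ⟨h0, hinv⟩
    have hmem : (0:ℝ) ∈ {t : ℝ | 0 ≤ t ∧ (0:ℝ) ≤ N t} := ⟨le_rfl, hN.nonneg le_rfl⟩
    have hbdd : BddBelow {t : ℝ | 0 ≤ t ∧ (0:ℝ) ≤ N t} := ⟨0, fun t ht => ht.1⟩
    exact le_antisymm (csInf_le hbdd hmem) (le_csInf ⟨0, hmem⟩ fun t ht => ht.1)
  rw [nwedge, h, div_zero]

lemma nwedge_pos (hN : MemN N) {t : ℝ} (ht : 0 < t) : 0 < nwedge N t :=
  div_pos one_pos (hN.ninv_pos (by positivity))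

end MemN

section Grad

variable [MetricSpace Ω] {f Φ : Ω → ℝ} {x : Ω}

lemma limsup_bot_real {α : Type*} (u : α → ℝ) : limsup u (⊥ : Filter α) = 0 := by
  rw [Filter.limsup_eq]
  have h : {a : ℝ | ∀ᶠ n in (⊥ : Filter α), u n ≤ a} = univ :=
    eq_univ_of_forall fun a => by simp
  rw [h, Real.sInf_of_not_bddBelow not_bddBelow_univ]

lemma LipschitzOnBalls.continuous (hf : LipschitzOnBalls f) : Continuous f := by
  rw [continuous_iff_continuousAt]
  intro x
  obtain ⟨K, hK⟩ := hf x 1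
  exact hK.continuousOn.continuousAt (Metric.ball_mem_nhds x one_pos)

lemma quot_bounded (hf : LipschitzOnBalls f) (x : Ω) :
    IsBoundedUnder (· ≤ ·) (𝓝[≠] x) (fun y => |f y - f x| / dist y x) := by
  obtain ⟨K, hK⟩ := hf x 1
  refine ⟨K, eventually_map.2 ?_⟩
  have h1 : ∀ᶠ y in 𝓝[≠] x, y ∈ Metric.ball x 1 :=
    (Metric.isOpen_ball.eventually_mem (Metric.mem_ball_self one_pos)).filter_mono
      nhdsWithin_le_nhds
  filter_upwards [h1, self_mem_nhdsWithin] with y hy hyx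
  have hd : 0 < dist y x := dist_pos.2 hyx
  have := hK.dist_le_mul y hy x (Metric.mem_ball_self one_pos)
  rw [Real.dist_eq] at this
  rw [div_le_iff₀ hd]
  exact this

lemma quot_cobounded {l : Filter Ω} [l.NeBot] (u : Ω → ℝ) (h : ∀ y, 0 ≤ u y) :
    IsCoboundedUnder (· ≤ ·) l u :=
  IsBoundedUnder.isCoboundedUnder_le ⟨0, eventually_map.2 (Eventually.of_forall h)⟩

lemma gradNorm_nonneg (hf : LipschitzOnBalls f) (x : Ω) : 0 ≤ gradNorm f x := by
  by_cases hbot : 𝓝[≠] x = ⊥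
  · rw [gradNorm, hbot, limsup_bot_real]
  · haveI : (𝓝[≠] x).NeBot := ⟨hbot⟩
    exact le_limsup_of_frequently_le
      ((Eventually.of_forall fun y => div_nonneg (abs_nonneg _) dist_nonneg).frequently)
      (quot_bounded hf x)

lemma gradNorm_le_mul (hf : LipschitzOnBalls f) {K : ℝ} (hK : 0 ≤ K)
    (h : ∀ y z, |Φ y - Φ z| ≤ K * |f y - f z|) (x : Ω) :
    gradNorm Φ x ≤ K * gradNorm f x := by
  by_cases hbot : 𝓝[≠] x = ⊥
  · rw [gradNorm, gradNorm, hbot, limsup_bot_real, limsup_bot_real, mul_zero]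
  · haveI : (𝓝[≠] x).NeBot := ⟨hbot⟩
    have hb := quot_bounded hf x
    have hcb : IsCoboundedUnder (· ≤ ·) (𝓝[≠] x) (fun y => |Φ y - Φ x| / dist y x) :=
      quot_cobounded _ fun y => div_nonneg (abs_nonneg _) dist_nonneg
    refine le_of_forall_pos_le_add fun δ hδ => ?_
    rcases hK.eq_or_lt with hK0 | hK0
    · have h0 : gradNorm Φ x ≤ 0 := by
        refine limsup_le_of_le hcb (Eventually.of_forall fun y => ?_)
        have := h y x
        rw [← hK0, zero_mul] at this
        have h2 : |Φ y - Φ x| = 0 := le_antisymm this (abs_nonneg _)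
        rw [h2, zero_div]
      rw [← hK0, zero_mul]
      linarith
    · set L := gradNorm f x with hL
      have hev : ∀ᶠ y in 𝓝[≠] x, |f y - f x| / dist y x < L + δ / K :=
        eventually_lt_of_limsup_lt (lt_add_of_pos_right L (div_pos hδ hK0)) hb
      have hls : gradNorm Φ x ≤ K * (L + δ / K) := by
        refine limsup_le_of_le hcb ?_
        filter_upwards [hev, self_mem_nhdsWithin] with y hy hyx
        have hd : 0 < dist y x := dist_pos.2 hyx
        calc |Φ y - Φ x| / dist y x ≤ (K * |f y - f x|) / dist y x := by
              gcongr
              exact h y x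
          _ = K * (|f y - f x| / dist y x) := mul_div_assoc _ _ _
          _ ≤ K * (L + δ / K) := mul_le_mul_of_nonneg_left hy.le hK
      calc gradNorm Φ x ≤ K * (L + δ / K) := hls
        _ = K * L + δ := by field_simp

lemma gradNorm_eq_zero_of_locally_const (hΦ : LipschitzOnBalls Φ) {U : Set Ω}
    (hU : IsOpen U) (hx : x ∈ U) (hc : ∀ y ∈ U, Φ y = Φ x) : gradNorm Φ x = 0 := by
  refine le_antisymm ?_ (gradNorm_nonneg hΦ x)
  by_cases hbot : 𝓝[≠] x = ⊥
  · rw [gradNorm, hbot, limsup_bot_real]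
  · haveI : (𝓝[≠] x).NeBot := ⟨hbot⟩
    have hcb : IsCoboundedUnder (· ≤ ·) (𝓝[≠] x) (fun y => |Φ y - Φ x| / dist y x) :=
      quot_cobounded _ fun y => div_nonneg (abs_nonneg _) dist_nonneg
    refine limsup_le_of_le hcb ?_
    have h1 : ∀ᶠ y in 𝓝[≠] x, y ∈ U :=
      (hU.eventually_mem hx).filter_mono nhdsWithin_le_nhds
    filter_upwards [h1] with y hy
    rw [hc y hy, sub_self, abs_zero, zero_div]

lemma gradNorm_sub_const (f : Ω → ℝ) (m : ℝ) (x : Ω) :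
    gradNorm (fun y => f y - m) x = gradNorm f x := by
  unfold gradNorm
  simp only [sub_sub_sub_cancel_right]

lemma gradNorm_const_sub (f : Ω → ℝ) (m : ℝ) (x : Ω) :
    gradNorm (fun y => m - f y) x = gradNorm f x := by
  unfold gradNorm
  have : (fun y => |m - f y - (m - f x)| / dist y x) = fun y => |f y - f x| / dist y x := by
    funext y
    rw [show m - f y - (m - f x) = -(f y - f x) by ring, abs_neg]
  rw [this]

lemma LipschitzOnBalls.sub_const (hf : LipschitzOnBalls f) (m : ℝ) :
    LipschitzOnBalls (fun y => f y - m) := by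
  intro x r
  obtain ⟨K, hK⟩ := hf x r
  exact ⟨K, fun y hy z hz => by simpa [edist_sub_right] using hK hy hz⟩

lemma LipschitzOnBalls.const_sub (hf : LipschitzOnBalls f) (m : ℝ) :
    LipschitzOnBalls (fun y => m - f y) := by
  intro x r
  obtain ⟨K, hK⟩ := hf x r
  exact ⟨K, fun y hy z hz => by simpa [edist_sub_left] using hK hy hz⟩

end Grad



section Clamp

/-- helper: clamping to [0,1] is 1-Lipschitz -/
lemma abs_min_one_sub_min_one (a b : ℝ) : |min 1 a - min 1 b| ≤ |a - b| := by
  have h1 := le_abs_self (a - b)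
  have h2 := neg_abs_le (a - b)
  rcases le_total a 1 with ha | ha <;> rcases le_total b 1 with hb | hb <;>
    simp [min_eq_left, min_eq_right, ha, hb] <;>
    rw [abs_le] <;> constructor <;> linarith

lemma abs_clamp_sub_clamp (a b : ℝ) :
    |max 0 (min 1 a) - max 0 (min 1 b)| ≤ |a - b| := by
  calc |max 0 (min 1 a) - max 0 (min 1 b)|
      = |min 1 a ⊔ 0 - min 1 b ⊔ 0| := by rw [max_comm (0:ℝ), max_comm (0:ℝ)]
    _ ≤ |min 1 a - min 1 b| := abs_max_sub_max_le_abs _ _ _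
    _ ≤ |a - b| := abs_min_one_sub_min_one a b

variable {Ω : Type*} [MetricSpace Ω] {f : Ω → ℝ}

/-- the truncation `Φ` between levels `c` and `c + b`. -/
def phiAux (f : Ω → ℝ) (c b : ℝ) : Ω → ℝ :=
  fun x => max 0 (min 1 ((f x - c) / b))

lemma phiAux_mem_Icc (c b : ℝ) (x : Ω) : phiAux f c b x ∈ Icc (0:ℝ) 1 :=
  ⟨le_max_left _ _, max_le zero_le_one (min_le_left _ _)⟩

lemma phiAux_abs_sub {c b : ℝ} (hb : 0 < b) (y z : Ω) :
    |phiAux f c b y - phiAux f c b z| ≤ b⁻¹ * |f y - f z| := by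
  calc |phiAux f c b y - phiAux f c b z| ≤ |(f y - c)/b - (f z - c)/b| :=
        abs_clamp_sub_clamp _ _
    _ = |f y - f z| / b := by rw [div_sub_div_same, show f y - c - (f z - c) = f y - f z by ring,
        abs_div, abs_of_pos hb]
    _ = b⁻¹ * |f y - f z| := by rw [div_eq_inv_mul]

lemma phiAux_lipschitzOnBalls {c b : ℝ} (hb : 0 < b) (hf : LipschitzOnBalls f) :
    LipschitzOnBalls (phiAux f c b) := by
  intro x r
  obtain ⟨K, hK⟩ := hf x r
  refine ⟨Real.toNNReal b⁻¹ * K, fun y hy z hz => ?_⟩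
  have h1 := phiAux_abs_sub (f := f) (c := c) hb y z
  have h2 := hK hy hz
  rw [edist_dist, edist_dist] at *
  rw [Real.dist_eq]
  calc ENNReal.ofReal |phiAux f c b y - phiAux f c b z|
      ≤ ENNReal.ofReal (b⁻¹ * |f y - f z|) := ENNReal.ofReal_le_ofReal h1
    _ = ENNReal.ofReal b⁻¹ * ENNReal.ofReal |f y - f z| := by
        rw [ENNReal.ofReal_mul (by positivity)]
    _ = ENNReal.ofReal b⁻¹ * ENNReal.ofReal (dist (f y) (f z)) := by rw [Real.dist_eq]
    _ ≤ ENNReal.ofReal b⁻¹ * (K * ENNReal.ofReal (dist y z)) := by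
        exact mul_le_mul_right h2 _
    _ = (Real.toNNReal b⁻¹ * K : ℝ≥0) * ENNReal.ofReal (dist y z) := by
        rw [ENNReal.ofReal, ← mul_assoc]; norm_cast

lemma phiAux_eq_one {c b : ℝ} (hb : 0 < b) {x : Ω} (hx : c + b ≤ f x) :
    phiAux f c b x = 1 := by
  have : (1:ℝ) ≤ (f x - c) / b := by rw [le_div_iff₀ hb]; linarith
  rw [phiAux, min_eq_left this, max_eq_right zero_le_one]

lemma phiAux_eq_zero {c b : ℝ} (hb : 0 < b) {x : Ω} (hx : f x ≤ c) :
    phiAux f c b x = 0 := by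
  have h1 : (f x - c) / b ≤ 0 := div_nonpos_of_nonpos_of_nonneg (by linarith) hb.le
  rw [phiAux, min_eq_right (h1.trans zero_le_one), max_eq_left h1]

lemma gradNorm_phiAux_le {c b : ℝ} (hb : 0 < b) (hf : LipschitzOnBalls f) (x : Ω) :
    gradNorm (phiAux f c b) x ≤ b⁻¹ * gradNorm f x :=
  gradNorm_le_mul hf (by positivity) (fun y z => phiAux_abs_sub hb y z) x

lemma gradNorm_phiAux_zero_lt {c b : ℝ} (hb : 0 < b) (hf : LipschitzOnBalls f) {x : Ω}
    (hx : f x < c) : gradNorm (phiAux f c b) x = 0 := by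
  refine gradNorm_eq_zero_of_locally_const (phiAux_lipschitzOnBalls hb hf)
    (U := {y | f y < c}) (isOpen_lt hf.continuous continuous_const) hx fun y hy => ?_
  rw [phiAux_eq_zero hb (le_of_lt hy), phiAux_eq_zero hb (le_of_lt hx)]

lemma gradNorm_phiAux_gt {c b : ℝ} (hb : 0 < b) (hf : LipschitzOnBalls f) {x : Ω}
    (hx : c + b < f x) : gradNorm (phiAux f c b) x = 0 := by
  refine gradNorm_eq_zero_of_locally_const (phiAux_lipschitzOnBalls hb hf)
    (U := {y | c + b < f y}) (isOpen_lt continuous_const hf.continuous) hx fun y hy => ?_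
  rw [phiAux_eq_one hb (le_of_lt hy), phiAux_eq_one hb (le_of_lt hx)]

end Clamp


section Dir1

variable {Ω : Type*} [MetricSpace Ω] [MeasurableSpace Ω] [BorelSpace Ω]

lemma ennreal_half_eq : (1/2 : ℝ≥0∞) = ENNReal.ofReal (1 - 1/2 : ℝ) := by
  rw [show (1:ℝ) - 1/2 = 1/2 by norm_num, ENNReal.ofReal_div_of_pos two_pos]
  simp

lemma direction1 (μ : Measure Ω) [IsProbabilityMeasure μ] {N : ℝ → ℝ} (hN : MemN N)
    {q : ℝ} (D₁ : ℝ) (hD₁ : 0 < D₁)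
    (hyp : ∀ f : Ω → ℝ, LipschitzOnBalls f → ∀ m : ℝ, IsMedian μ f m →
        ENNReal.ofReal (D₁ * orliczNorm μ N fun x => f x - m) ≤
          gradLqNorm μ (ENNReal.ofReal q) f)
    {t : ℝ} (ht : t ∈ Icc (0:ℝ) (1/2)) :
    ENNReal.ofReal (D₁ * nwedge N t) ≤ capacity μ q t (1/2) := by
  rcases ht.1.eq_or_lt with h0 | h0
  · rw [← h0, hN.nwedge_zero, mul_zero, ENNReal.ofReal_zero]; exact zero_le
  refine le_iInf fun Φ => le_iInf fun hΦ => le_iInf fun hrange => le_iInf fun hcap1 =>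
    le_iInf fun hcap0 => ?_
  have hmed : IsMedian μ Φ 0 := by
    constructor
    · have huniv : {x | (0:ℝ) ≤ Φ x} = univ := eq_univ_of_forall fun x => (hrange x).1
      rw [huniv, measure_univ]
      exact ENNReal.half_le_self
    · refine le_trans ?_ (measure_mono (fun x (hx : Φ x = 0) => le_of_eq hx))
      rw [ennreal_half_eq]; exact hcap0
  have habs : ∀ x, |Φ x - 0| = Φ x := fun x => by
    rw [sub_zero, abs_of_nonneg (hrange x).1]
  obtain ⟨hs₀nn, hs₀⟩ := hN.ninv_spec (le_of_lt one_pos)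
  set s₀ := ninv N 1 with hs₀def
  have hs₀pos : 0 < s₀ := hN.ninv_pos one_pos
  have hne : {v : ℝ | 0 < v ∧ ∫⁻ x, ENNReal.ofReal (N (|Φ x - 0| / v)) ∂μ ≤ 1}.Nonempty := by
    refine ⟨1/s₀, by positivity, ?_⟩
    have hb : ∀ x, ENNReal.ofReal (N (|Φ x - 0| / (1/s₀))) ≤ 1 := by
      intro x
      rw [habs]
      have h1 : Φ x / (1/s₀) ≤ s₀ := by
        rw [div_div_eq_mul_div, div_one]
        calc Φ x * s₀ ≤ 1 * s₀ := mul_le_mul_of_nonneg_right (hrange x).2 hs₀pos.le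
          _ = s₀ := one_mul s₀
      have hargnn : 0 ≤ Φ x / (1/s₀) := div_nonneg (hrange x).1 (by positivity)
      have h2 : N (Φ x / (1/s₀)) ≤ 1 := by
        have := hN.mono hargnn hs₀nn h1
        rwa [hs₀] at this
      calc ENNReal.ofReal (N (Φ x / (1/s₀))) ≤ ENNReal.ofReal 1 :=
            ENNReal.ofReal_le_ofReal h2
        _ = 1 := ENNReal.ofReal_one
    calc ∫⁻ x, ENNReal.ofReal (N (|Φ x - 0| / (1/s₀))) ∂μ ≤ ∫⁻ _, 1 ∂μ := lintegral_mono hb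
      _ = 1 := by rw [lintegral_one, measure_univ]
  have hgoal : nwedge N t ≤ orliczNorm μ N fun x => Φ x - 0 := by
    rw [orliczNorm]
    refine le_csInf hne fun v hv => ?_
    obtain ⟨hvpos, hvint⟩ := hv
    have hms : MeasurableSet {x | Φ x = 1} :=
      (isClosed_eq hΦ.continuous continuous_const).measurableSet
    have hlow : ENNReal.ofReal (N (1/v)) * μ {x | Φ x = 1} ≤ 1 := by
      have e1 : ∫⁻ x in {x | Φ x = 1}, ENNReal.ofReal (N (|Φ x - 0| / v)) ∂μ
          = ENNReal.ofReal (N (1/v)) * μ {x | Φ x = 1} := by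
        rw [setLIntegral_congr_fun hms (fun x hx => by
          rw [habs, show Φ x = 1 from hx])]
        exact setLIntegral_const _ _
      calc ENNReal.ofReal (N (1/v)) * μ {x | Φ x = 1}
          = ∫⁻ x in {x | Φ x = 1}, ENNReal.ofReal (N (|Φ x - 0| / v)) ∂μ := e1.symm
        _ ≤ ∫⁻ x, ENNReal.ofReal (N (|Φ x - 0| / v)) ∂μ := setLIntegral_le_lintegral _ _
        _ ≤ 1 := hvint
    have hNt : N (1/v) * t ≤ 1 := by
      have h2 := le_trans (mul_le_mul_right hcap1 (ENNReal.ofReal (N (1/v)))) hlow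
      rw [← ENNReal.ofReal_mul (hN.nonneg (by positivity))] at h2
      exact ENNReal.ofReal_le_one.1 h2
    have hNle : N (1/v) ≤ 1/t := (le_div_iff₀ h0).2 hNt
    obtain ⟨ht₀nn, ht₀⟩ := hN.ninv_spec (le_of_lt (show (0:ℝ) < 1/t by positivity))
    set s₁ := ninv N (1/t) with hs₁def
    have hkey : 1/v ≤ s₁ := by
      by_contra hc
      push_neg at hc
      have h3 := hN.strictMonoOn ht₀nn (show (1:ℝ)/v ∈ Ici 0 by
        exact mem_Ici.mpr (by positivity)) hc
      rw [ht₀] at h3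
      linarith
    have hs₁pos : 0 < s₁ := lt_of_lt_of_le (by positivity) hkey
    rw [nwedge]
    calc 1/s₁ ≤ 1/(1/v) := one_div_le_one_div_of_le (by positivity) hkey
      _ = v := one_div_one_div v
  exact le_trans (ENNReal.ofReal_le_ofReal (mul_le_mul_of_nonneg_left hgoal hD₁.le))
    (hyp Φ hΦ 0 hmed)

end Dir1

section Key

lemma lintegral_const_mul_le' {α : Type*} [MeasurableSpace α] (μ : Measure α)
    {c : ℝ≥0∞} (hc0 : c ≠ 0) (hct : c ≠ ∞) (f : α → ℝ≥0∞) :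
    ∫⁻ x, c * f x ∂μ ≤ c * ∫⁻ x, f x ∂μ := by
  have h := lintegral_const_mul_le (μ := μ) c⁻¹ (fun x => c * f x)
  simp only [← mul_assoc, ENNReal.inv_mul_cancel hc0 hct, one_mul] at h
  calc ∫⁻ x, c * f x ∂μ = c * (c⁻¹ * ∫⁻ x, c * f x ∂μ) := by
        rw [← mul_assoc, ENNReal.mul_inv_cancel hc0 hct, one_mul]
    _ ≤ c * ∫⁻ x, f x ∂μ := mul_le_mul_right h _

variable {Ω : Type*} [MetricSpace Ω] [MeasurableSpace Ω] [BorelSpace Ω]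

lemma key_estimate (μ : Measure Ω) [IsProbabilityMeasure μ] {N : ℝ → ℝ} (hN : MemN N)
    {q : ℝ} (hq : 1 ≤ q)
    (hNq : MonotoneOn (fun t => N t ^ (1 / q) / t) (Ioi (0 : ℝ)))
    {D₂ : ℝ} (hD₂ : 0 < D₂)
    (hcap : ∀ t ∈ Icc (0:ℝ) (1/2), ENNReal.ofReal (D₂ * nwedge N t) ≤ capacity μ q t (1/2))
    {h : Ω → ℝ} (hh : LipschitzOnBalls h)
    (hmed : (1/2 : ℝ≥0∞) ≤ μ {x | h x ≤ 0})
    {θ v : ℝ} (hθ0 : 0 < θ) (hθ1 : θ < 1) (hv : 0 < v)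
    (hfin : (∫⁻ x, (ENNReal.ofReal (gradNorm h x)) ^ q ∂μ) ≠ ∞)
    (hvG : ((∫⁻ x, (ENNReal.ofReal (gradNorm h x)) ^ q ∂μ).toReal) ^ (1/q)
      < D₂ * θ * v / 4) :
    ∫⁻ x in {x | 0 < h x}, ENNReal.ofReal (N (h x / v)) ∂μ ≤
      ENNReal.ofReal ((4 / (D₂ * θ * v)) ^ q) *
        ∫⁻ x in {x | 0 < h x}, (ENNReal.ofReal (gradNorm h x)) ^ q ∂μ := by
  have hq0 : 0 < q := lt_of_lt_of_le one_pos hq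
  have hmeas : Measurable h := hh.continuous.measurable
  set gq : Ω → ℝ≥0∞ := fun x => (ENNReal.ofReal (gradNorm h x)) ^ q with hgq
  -- levels
  set t : ℤ → ℝ := fun k => (2:ℝ) ^ k with ht
  have tpos : ∀ k, 0 < t k := fun k => zpow_pos two_pos k
  have tmono : ∀ {i j : ℤ}, i ≤ j → t i ≤ t j :=
    fun {i j} hij => zpow_le_zpow_right₀ one_le_two hij
  have tsucc : ∀ k, t (k + 1) = 2 * t k := fun k => by
    simp only [ht]; rw [zpow_add_one₀ (two_ne_zero)]; ring
  have t4 : ∀ k, t (k + 1) = 4 * t (k - 1) := fun k => by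
    simp only [ht]
    rw [show k + 1 = (k - 1) + 1 + 1 by ring, zpow_add_one₀ (two_ne_zero),
      zpow_add_one₀ (two_ne_zero)]
    ring
  -- strips
  set P : ℤ → Set Ω := fun k => {x | t k ≤ h x ∧ h x < t (k + 1)} with hP
  have hPmeas : ∀ k, MeasurableSet (P k) := fun k =>
    (measurableSet_le measurable_const hmeas).inter (measurableSet_lt hmeas measurable_const)
  have hPdisj : Pairwise (Function.onFun Disjoint P) := by
    have key : ∀ {a b : ℤ}, a < b → Disjoint (P a) (P b) := by
      intro a b hab
      refine Set.disjoint_left.mpr fun x hxa hxb => ?_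
      have h1 : h x < t (a + 1) := hxa.2
      have h2 : t (a + 1) ≤ t b := tmono (by omega)
      exact absurd (lt_of_lt_of_le h1 (h2.trans hxb.1)) (lt_irrefl _)
    intro i j hij
    rcases lt_or_gt_of_ne hij with hlt | hgt
    · exact key hlt
    · exact (key hgt).symm
  have hPunion : (⋃ k, P k) = {x | 0 < h x} := by
    ext x
    simp only [mem_iUnion, mem_setOf_eq, hP]
    constructor
    · rintro ⟨k, hk1, _⟩
      exact lt_of_lt_of_le (tpos k) hk1
    · intro hx
      obtain ⟨n, hn⟩ := exists_mem_Ico_zpow hx one_lt_two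
      exact ⟨n, hn.1, hn.2⟩
  -- strip integrals
  set S : ℤ → ℝ≥0∞ := fun k => ∫⁻ x in P k, gq x ∂μ with hS
  have hSle : ∀ k, S k ≤ ∫⁻ x, gq x ∂μ := fun k => setLIntegral_le_lintegral _ _
  have hSfin : ∀ k, S k ≠ ∞ := fun k => (lt_of_le_of_lt (hSle k) hfin.lt_top).ne
  set s : ℤ → ℝ := fun k => (S k).toReal ^ (1/q) with hs
  have hsnn : ∀ k, 0 ≤ s k := fun k => Real.rpow_nonneg ENNReal.toReal_nonneg _
  have hsG : ∀ k, s k < D₂ * θ * v / 4 := fun k =>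
    lt_of_le_of_lt (Real.rpow_le_rpow ENNReal.toReal_nonneg
      (ENNReal.toReal_mono hfin (hSle k)) (by positivity)) hvG
  -- tail measures
  set ω : ℤ → ℝ≥0∞ := fun k => μ {x | t k ≤ h x} with hω
  set r : ℤ → ℝ := fun k => (ω k).toReal with hr
  have hωfin : ∀ k, ω k ≠ ∞ := fun k => measure_ne_top μ _
  have hωr : ∀ k, ω k = ENNReal.ofReal (r k) := fun k => (ENNReal.ofReal_toReal (hωfin k)).symm
  have hrnn : ∀ k, 0 ≤ r k := fun k => ENNReal.toReal_nonneg
  have hrhalf : ∀ k, r k ≤ 1/2 := by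
    intro k
    have hms0 : MeasurableSet {x | h x ≤ 0} := measurableSet_le hmeas measurable_const
    have hsub : {x | t k ≤ h x} ⊆ {x | h x ≤ 0}ᶜ := fun x hx => by
      simp only [mem_compl_iff, mem_setOf_eq, not_le]
      exact lt_of_lt_of_le (tpos k) hx
    have hcmp : μ {x | h x ≤ 0}ᶜ = 1 - μ {x | h x ≤ 0} := by
      rw [measure_compl hms0 (measure_ne_top μ _), measure_univ]
    have h1 : ω k ≤ 1 - μ {x | h x ≤ 0} := hcmp ▸ measure_mono hsub
    have h2 : (1:ℝ≥0∞) - μ {x | h x ≤ 0} ≤ 1 - 1/2 := tsub_le_tsub_left hmed 1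
    have h3 : (1:ℝ≥0∞) - 1/2 = 1/2 := ENNReal.sub_half ENNReal.one_ne_top
    have h4 : ω k ≤ 1/2 := le_trans h1 (h2.trans_eq h3)
    calc r k ≤ ((1:ℝ≥0∞)/2).toReal := ENNReal.toReal_mono (by simp) h4
      _ = 1/2 := by simp
  -- capacity step
  have claim1 : ∀ k, D₂ * nwedge N (r (k + 1)) ≤ (θ * t k)⁻¹ * s k := by
    intro k
    have hb : 0 < θ * t k := mul_pos hθ0 (tpos k)
    set Φk : Ω → ℝ := phiAux h (t k) (θ * t k) with hΦk
    have hΦlip : LipschitzOnBalls Φk := phiAux_lipschitzOnBalls hb hh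
    have hcap1 : ENNReal.ofReal (r (k+1)) ≤ μ {x | Φk x = 1} := by
      rw [← hωr]
      refine measure_mono fun x hx => ?_
      refine phiAux_eq_one hb ?_
      have hle : t k + θ * t k ≤ t (k + 1) := by
        rw [tsucc k]; nlinarith [tpos k]
      exact le_trans hle hx
    have hcap0 : ENNReal.ofReal (1 - 1/2) ≤ μ {x | Φk x = 0} := by
      rw [← ennreal_half_eq]
      refine le_trans hmed (measure_mono fun x hx => ?_)
      exact phiAux_eq_zero hb (le_trans hx (tpos k).le)
    have hcaple : capacity μ q (r (k+1)) (1/2) ≤ gradLqNorm μ (ENNReal.ofReal q) Φk :=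
      iInf_le_of_le Φk (iInf_le_of_le hΦlip (iInf_le_of_le (phiAux_mem_Icc _ _)
        (iInf_le_of_le hcap1 (iInf_le_of_le hcap0 le_rfl))))
    set cq : ℝ≥0∞ := ENNReal.ofReal ((θ * t k)⁻¹) ^ q with hcq
    have hcq0 : cq ≠ 0 := by
      have hpos : (0:ℝ≥0∞) < ENNReal.ofReal ((θ * t k)⁻¹) := ENNReal.ofReal_pos.2 (by positivity)
      exact (ENNReal.rpow_pos hpos ENNReal.ofReal_ne_top).ne'
    have hcqt : cq ≠ ∞ := ENNReal.rpow_ne_top_of_nonneg hq0.le ENNReal.ofReal_ne_top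
    have hpt : ∀ x, (‖gradNorm Φk x‖₊ : ℝ≥0∞) ^ q ≤
        (P k).indicator (fun y => cq * gq y) x := by
      intro x
      rcases lt_or_ge (h x) (t k) with hlt | hge
      · rw [hΦk, gradNorm_phiAux_zero_lt hb hh hlt]
        simp only [nnnorm_zero, ENNReal.coe_zero, ENNReal.zero_rpow_of_pos hq0]
        exact zero_le
      rcases lt_or_ge (t k + θ * t k) (h x) with hgt | hle
      · rw [hΦk, gradNorm_phiAux_gt hb hh hgt]
        simp only [nnnorm_zero, ENNReal.coe_zero, ENNReal.zero_rpow_of_pos hq0]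
        exact zero_le
      · have hxP : x ∈ P k := by
          refine ⟨hge, ?_⟩
          rw [tsucc k]
          nlinarith [tpos k]
        rw [Set.indicator_of_mem hxP]
        have h1 : (‖gradNorm Φk x‖₊ : ℝ≥0∞) = ENNReal.ofReal (gradNorm Φk x) :=
          Real.enorm_eq_ofReal (gradNorm_nonneg hΦlip x)
        rw [h1]
        have h2 : gradNorm Φk x ≤ (θ * t k)⁻¹ * gradNorm h x :=
          gradNorm_phiAux_le hb hh x
        calc ENNReal.ofReal (gradNorm Φk x) ^ q
            ≤ ENNReal.ofReal ((θ * t k)⁻¹ * gradNorm h x) ^ q :=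
              ENNReal.rpow_le_rpow (ENNReal.ofReal_le_ofReal h2) hq0.le
          _ = cq * gq x := by
              rw [ENNReal.ofReal_mul (by positivity), ENNReal.mul_rpow_of_nonneg _ _ hq0.le]
    have hgrble : gradLqNorm μ (ENNReal.ofReal q) Φk ≤ ENNReal.ofReal ((θ * t k)⁻¹ * s k) := by
      have hp0 : (ENNReal.ofReal q) ≠ 0 := (ENNReal.ofReal_pos.2 hq0).ne'
      have hptr : (ENNReal.ofReal q).toReal = q := ENNReal.toReal_ofReal hq0.le
      rw [gradLqNorm, eLpNorm_eq_lintegral_rpow_enorm_toReal hp0 ENNReal.ofReal_ne_top, hptr]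
      have hint : ∫⁻ x, (‖gradNorm Φk x‖₊ : ℝ≥0∞) ^ q ∂μ ≤ cq * S k := by
        calc ∫⁻ x, (‖gradNorm Φk x‖₊ : ℝ≥0∞) ^ q ∂μ
            ≤ ∫⁻ x, (P k).indicator (fun y => cq * gq y) x ∂μ := lintegral_mono hpt
          _ = ∫⁻ x in P k, cq * gq x ∂μ := lintegral_indicator (hPmeas k) _
          _ ≤ cq * S k := lintegral_const_mul_le' _ hcq0 hcqt _
      calc (∫⁻ x, (‖gradNorm Φk x‖₊ : ℝ≥0∞) ^ q ∂μ) ^ (1/q)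
          ≤ (cq * S k) ^ (1/q) := ENNReal.rpow_le_rpow hint (by positivity)
        _ = cq ^ (1/q) * (S k) ^ (1/q) := ENNReal.mul_rpow_of_nonneg _ _ (by positivity)
        _ = ENNReal.ofReal ((θ * t k)⁻¹) * ENNReal.ofReal (s k) := by
            congr 1
            · rw [hcq, ← ENNReal.rpow_mul, mul_one_div_cancel hq0.ne', ENNReal.rpow_one]
            · simp only [hs]
              rw [ENNReal.toReal_rpow, ENNReal.ofReal_toReal
                (ENNReal.rpow_ne_top_of_nonneg (by positivity) (hSfin k))]
        _ = ENNReal.ofReal ((θ * t k)⁻¹ * s k) := by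
            rw [ENNReal.ofReal_mul (by positivity)]
    have hfinal := le_trans (hcap (r (k+1)) ⟨hrnn _, hrhalf _⟩) (le_trans hcaple hgrble)
    exact (ENNReal.ofReal_le_ofReal_iff
      (mul_nonneg (inv_nonneg.mpr hb.le) (hsnn k))).1 hfinal
  -- main per-strip estimate
  have claim2 : ∀ k : ℤ, ENNReal.ofReal (N (t (k + 1) / v)) * ω k ≤
      ENNReal.ofReal ((4 / (D₂ * θ * v)) ^ q) * S (k - 1) := by
    intro k
    have hNu : 0 ≤ N (t (k+1) / v) := hN.nonneg (by positivity)
    rcases (hrnn k).eq_or_lt with hrk0 | hrk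
    · rw [hωr k, ← hrk0, ENNReal.ofReal_zero, mul_zero]
      exact zero_le
    have hc1 := claim1 (k - 1)
    rw [sub_add_cancel] at hc1
    rcases (hsnn (k-1)).eq_or_lt with hs0 | hs0
    · exfalso
      rw [← hs0, mul_zero] at hc1
      have hpos : 0 < D₂ * nwedge N (r k) := mul_pos hD₂ (hN.nwedge_pos hrk)
      linarith
    obtain ⟨hs₂nn, hs₂⟩ := hN.ninv_spec (le_of_lt (show (0:ℝ) < 1 / r k by positivity))
    set s₂ := ninv N (1 / r k) with hs₂def
    have hs₂pos : 0 < s₂ := hN.ninv_pos (by positivity)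
    have hwedge : nwedge N (r k) = 1 / s₂ := rfl
    set c : ℝ := D₂ * θ * t (k - 1) / s (k - 1) with hc
    have htk1 : 0 < t (k - 1) := tpos _
    have hcpos : 0 < c := by rw [hc]; positivity
    have hcs₂ : c ≤ s₂ := by
      rw [hwedge] at hc1
      rw [hc, div_le_iff₀ hs0]
      have h5 := mul_le_mul_of_nonneg_right hc1 (le_of_lt (mul_pos hs₂pos
        (mul_pos hθ0 htk1)))
      have he1 : D₂ * (1 / s₂) * (s₂ * (θ * t (k-1))) = D₂ * (θ * t (k-1)) := by
        field_simp
      have he2 : (θ * t (k-1))⁻¹ * s (k-1) * (s₂ * (θ * t (k-1))) = s (k-1) * s₂ := by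
        field_simp
      rw [he1, he2] at h5
      nlinarith [h5]
    have hNcle : N c ≤ 1 / r k := by
      rw [← hs₂]
      exact hN.mono (mem_Ici.mpr hcpos.le) (mem_Ici.mpr hs₂nn) hcs₂
    have hNcpos : 0 < N c := by
      have hsm := hN.strictMonoOn (mem_Ici.mpr le_rfl) (mem_Ici.mpr hcpos.le) hcpos
      rwa [hN.zero_s6] at hsm
    have hrNc : r k ≤ 1 / N c := by
      rw [le_div_iff₀ hNcpos]
      calc r k * N c ≤ r k * (1 / r k) := mul_le_mul_of_nonneg_left hNcle (hrnn k)
        _ = 1 := by field_simp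
    set u : ℝ := t (k + 1) / v with hu
    have hupos : 0 < u := by rw [hu]; positivity
    have huc : u ≤ c := by
      rw [hu, t4 k, hc, div_le_div_iff₀ hv hs0]
      nlinarith [mul_lt_mul_of_pos_left (hsG (k-1)) htk1]
    have hratio : N u * r k ≤ (u / c) ^ q := by
      have hm := hNq (mem_Ioi.mpr hupos) (mem_Ioi.mpr hcpos) huc
      simp only [] at hm
      have hNu' : 0 ≤ N u := hN.nonneg hupos.le
      have hNc' : 0 ≤ N c := hNcpos.le
      have h6 : N u ^ (1/q) * c ≤ N c ^ (1/q) * u := by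
        rw [div_le_div_iff₀ hupos hcpos] at hm
        linarith
      have h7 : (N u ^ (1/q) * c) ^ q ≤ (N c ^ (1/q) * u) ^ q :=
        Real.rpow_le_rpow (mul_nonneg (Real.rpow_nonneg hNu' _) hcpos.le) h6 hq0.le
      rw [Real.mul_rpow (Real.rpow_nonneg hNu' _) hcpos.le,
        Real.mul_rpow (Real.rpow_nonneg hNc' _) hupos.le, one_div,
        Real.rpow_inv_rpow hNu' hq0.ne', Real.rpow_inv_rpow hNc' hq0.ne'] at h7
      calc N u * r k ≤ N u * (1 / N c) := mul_le_mul_of_nonneg_left hrNc hNu'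
        _ = N u / N c := by rw [mul_one_div]
        _ ≤ u ^ q / c ^ q := by
            rw [div_le_div_iff₀ hNcpos (Real.rpow_pos_of_pos hcpos q)]
            linarith
        _ = (u / c) ^ q := (Real.div_rpow hupos.le hcpos.le q).symm
    have hucs : (u / c) ^ q = (4 / (D₂ * θ * v)) ^ q * (S (k-1)).toReal := by
      have he : u / c = 4 / (D₂ * θ * v) * s (k - 1) := by
        rw [hu, hc, t4 k]
        field_simp
      rw [he, Real.mul_rpow (by positivity) (hsnn _)]
      congr 1
      simp only [hs]
      rw [one_div, Real.rpow_inv_rpow ENNReal.toReal_nonneg hq0.ne']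
    calc ENNReal.ofReal (N (t (k + 1) / v)) * ω k
        = ENNReal.ofReal (N u) * ENNReal.ofReal (r k) := by rw [hωr, hu]
      _ = ENNReal.ofReal (N u * r k) := (ENNReal.ofReal_mul hNu).symm
      _ ≤ ENNReal.ofReal ((u / c) ^ q) := ENNReal.ofReal_le_ofReal hratio
      _ = ENNReal.ofReal ((4 / (D₂ * θ * v)) ^ q * (S (k-1)).toReal) := by rw [hucs]
      _ = ENNReal.ofReal ((4 / (D₂ * θ * v)) ^ q) * ENNReal.ofReal ((S (k-1)).toReal) := by
          rw [ENNReal.ofReal_mul (by positivity)]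
      _ = ENNReal.ofReal ((4 / (D₂ * θ * v)) ^ q) * S (k - 1) := by
          rw [ENNReal.ofReal_toReal (hSfin _)]
  -- per-strip integral bound
  have claim3 : ∀ k : ℤ, ∫⁻ x in P k, ENNReal.ofReal (N (h x / v)) ∂μ ≤
      ENNReal.ofReal (N (t (k + 1) / v)) * ω k := by
    intro k
    calc ∫⁻ x in P k, ENNReal.ofReal (N (h x / v)) ∂μ
        ≤ ∫⁻ _ in P k, ENNReal.ofReal (N (t (k + 1) / v)) ∂μ := by
          refine setLIntegral_mono_ae aemeasurable_const (ae_of_all μ fun x hx => ?_)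
          refine ENNReal.ofReal_le_ofReal ?_
          have hx1 : 0 ≤ h x / v :=
            le_of_lt (div_pos (lt_of_lt_of_le (tpos k) hx.1) hv)
          have hx2 : h x / v ≤ t (k + 1) / v := by gcongr; exact hx.2.le
          exact hN.mono (mem_Ici.mpr hx1) (mem_Ici.mpr (by positivity)) hx2
      _ = ENNReal.ofReal (N (t (k + 1) / v)) * μ (P k) := setLIntegral_const _ _
      _ ≤ ENNReal.ofReal (N (t (k + 1) / v)) * ω k :=
          mul_le_mul_right (measure_mono fun x hx => hx.1) _
  -- assemble
  have hsum1 : ∫⁻ x in {x | 0 < h x}, ENNReal.ofReal (N (h x / v)) ∂μ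
      = ∑' k : ℤ, ∫⁻ x in P k, ENNReal.ofReal (N (h x / v)) ∂μ := by
    rw [← hPunion, Measure.restrict_iUnion hPdisj hPmeas, lintegral_sum_measure]
  have hsum2 : ∫⁻ x in {x | 0 < h x}, gq x ∂μ = ∑' k : ℤ, S k := by
    rw [← hPunion, Measure.restrict_iUnion hPdisj hPmeas, lintegral_sum_measure]
  rw [hsum1, hsum2]
  calc ∑' k : ℤ, ∫⁻ x in P k, ENNReal.ofReal (N (h x / v)) ∂μ
      ≤ ∑' k : ℤ, ENNReal.ofReal ((4 / (D₂ * θ * v)) ^ q) * S (k - 1) :=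
        ENNReal.tsum_le_tsum fun k => le_trans (claim3 k) (claim2 k)
    _ = ENNReal.ofReal ((4 / (D₂ * θ * v)) ^ q) * ∑' k : ℤ, S (k - 1) :=
        ENNReal.tsum_mul_left
    _ = ENNReal.ofReal ((4 / (D₂ * θ * v)) ^ q) * ∑' k : ℤ, S k := by
        congr 1
        have he := (Equiv.subRight (1:ℤ)).tsum_eq S
        simpa [Equiv.subRight] using he

end Key

/-- For `N ∈ 𝒩` with `N(t)^{1/q}/t` non-decreasing, Orlicz–Sobolev
inequalities are equivalent to `q`-capacity inequalities: (1) with `D₁` gives (2) with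
`D₂ = D₁`, and (2) with `D₂` gives (1) with `D₂/4` (so `D₁ ≤ D₂ ≤ 4·D₁`). -/
theorem orlicz_sobolev_iff_cap {Ω : Type*} [MetricSpace Ω]
    [TopologicalSpace.SeparableSpace Ω] [MeasurableSpace Ω] [BorelSpace Ω]
    (μ : Measure Ω) [IsProbabilityMeasure μ] (hnd : ∀ x : Ω, μ {x} ≠ 1)
    (N : ℝ → ℝ) (hN : MemN N) (q : ℝ) (hq : 1 ≤ q)
    (hNq : MonotoneOn (fun t => N t ^ (1 / q) / t) (Ioi (0 : ℝ))) :
    (∀ D₁ : ℝ, 0 < D₁ →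
      (∀ f : Ω → ℝ, LipschitzOnBalls f → ∀ m : ℝ, IsMedian μ f m →
        ENNReal.ofReal (D₁ * orliczNorm μ N fun x => f x - m) ≤
          gradLqNorm μ (ENNReal.ofReal q) f) →
      ∀ t ∈ Icc (0 : ℝ) (1 / 2),
        ENNReal.ofReal (D₁ * nwedge N t) ≤ capacity μ q t (1 / 2)) ∧
    (∀ D₂ : ℝ, 0 < D₂ →
      (∀ t ∈ Icc (0 : ℝ) (1 / 2),
        ENNReal.ofReal (D₂ * nwedge N t) ≤ capacity μ q t (1 / 2)) →
      ∀ f : Ω → ℝ, LipschitzOnBalls f → ∀ m : ℝ, IsMedian μ f m →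
        ENNReal.ofReal (D₂ / 4 * orliczNorm μ N fun x => f x - m) ≤
          gradLqNorm μ (ENNReal.ofReal q) f) := by
  constructor
  · intro D₁ hD₁ hyp t ht
    exact direction1 μ hN D₁ hD₁ hyp ht
  · intro D₂ hD₂ hcap f hf m hmed
    have hq0 : 0 < q := lt_of_lt_of_le one_pos hq
    by_cases htop : gradLqNorm μ (ENNReal.ofReal q) f = ∞
    · rw [htop]; exact le_top
    have hp0 : (ENNReal.ofReal q) ≠ 0 := (ENNReal.ofReal_pos.2 hq0).ne'
    have hptr : (ENNReal.ofReal q).toReal = q := ENNReal.toReal_ofReal hq0.le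
    have hnn : ∀ x, (‖gradNorm f x‖₊ : ℝ≥0∞) = ENNReal.ofReal (gradNorm f x) :=
      fun x => Real.enorm_eq_ofReal (gradNorm_nonneg hf x)
    set Etot : ℝ≥0∞ := ∫⁻ x, (ENNReal.ofReal (gradNorm f x)) ^ q ∂μ with hEtot
    have hgradeq : gradLqNorm μ (ENNReal.ofReal q) f = Etot ^ (1/q) := by
      rw [gradLqNorm, eLpNorm_eq_lintegral_rpow_enorm_toReal hp0 ENNReal.ofReal_ne_top, hptr]
      congr 1
      exact lintegral_congr fun x => by rw [← hnn]; rfl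
    have hEfin : Etot ≠ ∞ := by
      intro hE
      apply htop
      rw [hgradeq, hE, ENNReal.top_rpow_of_pos (by positivity)]
    set Gr : ℝ := Etot.toReal ^ (1/q) with hGr
    have hGrnn : 0 ≤ Gr := Real.rpow_nonneg ENNReal.toReal_nonneg _
    have hofGr : ENNReal.ofReal Gr = Etot ^ (1/q) := by
      rw [hGr, ENNReal.toReal_rpow, ENNReal.ofReal_toReal
        (ENNReal.rpow_ne_top_of_nonneg (by positivity) hEfin)]
    set B : ℝ := 4 * Gr / D₂ with hB
    have hBnn : 0 ≤ B := by positivity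
    have hfmeas : Measurable f := hf.continuous.measurable
    have horl : orliczNorm μ N (fun x => f x - m) ≤ B := by
      refine le_of_forall_pos_le_add fun ε hε => ?_
      rw [orliczNorm]
      refine csInf_le ⟨0, fun w hw => hw.1.le⟩ ?_
      set v : ℝ := B + ε with hv
      have hvpos : 0 < v := by positivity
      refine ⟨hvpos, ?_⟩
      -- choose θ
      have hGrW : Gr < D₂ * v / 4 := by
        have hBv : B < v := lt_add_of_pos_right B hε
        rw [hB, div_lt_iff₀ hD₂] at hBv
        rw [lt_div_iff₀ (by norm_num : (0:ℝ) < 4)]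
        linarith
      set W : ℝ := D₂ * v / 4 with hW
      have hWpos : 0 < W := by positivity
      set θ : ℝ := (Gr / W + 1) / 2 with hθ
      have hθ0 : 0 < θ := by positivity
      have hGrW1 : Gr / W < 1 := (div_lt_one hWpos).2 hGrW
      have hθ1 : θ < 1 := by rw [hθ]; linarith
      have hθG : Gr < D₂ * θ * v / 4 := by
        have h1 : Gr / W < θ := by rw [hθ]; linarith
        have h2 : D₂ * θ * v / 4 = θ * W := by rw [hW]; ring
        rw [h2]
        calc Gr = Gr / W * W := by field_simp
          _ < θ * W := mul_lt_mul_of_pos_right h1 hWpos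
      -- plus and minus parts
      set gp : Ω → ℝ := fun x => f x - m with hhp
      set gm : Ω → ℝ := fun x => m - f x with hhm
      have hlipP : LipschitzOnBalls gp := hf.sub_const m
      have hlipM : LipschitzOnBalls gm := hf.const_sub m
      have hintPeq : (∫⁻ x, (ENNReal.ofReal (gradNorm gp x)) ^ q ∂μ) = Etot :=
        lintegral_congr fun x => by rw [hhp, gradNorm_sub_const]
      have hintMeq : (∫⁻ x, (ENNReal.ofReal (gradNorm gm x)) ^ q ∂μ) = Etot :=
        lintegral_congr fun x => by rw [hhm, gradNorm_const_sub]
      have hmedP : (1/2:ℝ≥0∞) ≤ μ {x | gp x ≤ 0} := by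
        have he : {x | gp x ≤ 0} = {x | f x ≤ m} := by
          ext x; simp [hhp, sub_nonpos]
        rw [he]; exact hmed.2
      have hmedM : (1/2:ℝ≥0∞) ≤ μ {x | gm x ≤ 0} := by
        have he : {x | gm x ≤ 0} = {x | m ≤ f x} := by
          ext x; simp [hhm, sub_nonpos]
        rw [he]; exact hmed.1
      have hkeyP := key_estimate μ hN hq hNq hD₂ hcap hlipP hmedP hθ0 hθ1 hvpos
        (by rw [hintPeq]; exact hEfin) (by rw [hintPeq]; exact hθG)
      have hkeyM := key_estimate μ hN hq hNq hD₂ hcap hlipM hmedM hθ0 hθ1 hvpos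
        (by rw [hintMeq]; exact hEfin) (by rw [hintMeq]; exact hθG)
      set Kq : ℝ≥0∞ := ENNReal.ofReal ((4 / (D₂ * θ * v)) ^ q) with hKq
      -- measurability of the integrand
      have hImeas : Measurable fun x => ENNReal.ofReal (N (|f x - m| / v)) := by
        have hNNcont : Continuous (fun a : ℝ => N (max a 0)) :=
          hN.contOn.comp_continuous (continuous_id.max continuous_const)
            (fun a => mem_Ici.mpr (le_max_right a 0))
        have he : (fun x => ENNReal.ofReal (N (|f x - m| / v)))
            = fun x => ENNReal.ofReal (N (max (|f x - m| / v) 0)) := by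
          funext x
          rw [max_eq_left (by positivity)]
        rw [he]
        exact (hNNcont.measurable.comp ((hfmeas.sub measurable_const).abs.div_const v)).ennreal_ofReal
      have hmsP : MeasurableSet {x | 0 < gp x} :=
        measurableSet_lt measurable_const (hfmeas.sub measurable_const)
      have hmsM : MeasurableSet {x | 0 < gm x} :=
        measurableSet_lt measurable_const (measurable_const.sub hfmeas)
      have hptw : ∀ x, ENNReal.ofReal (N (|f x - m| / v)) ≤
          {x | 0 < gp x}.indicator (fun x => ENNReal.ofReal (N (|f x - m| / v))) x
          + {x | 0 < gm x}.indicator (fun x => ENNReal.ofReal (N (|f x - m| / v))) x := by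
        intro x
        rcases lt_trichotomy (f x) m with hlt | heq | hgt
        · have hmem : x ∈ {x | 0 < gm x} := by simp only [hhm, mem_setOf_eq]; linarith
          have hnot : x ∉ {x | 0 < gp x} := by simp only [hhp, mem_setOf_eq, not_lt]; linarith
          rw [Set.indicator_of_mem hmem, Set.indicator_of_notMem hnot, zero_add]
        · have hz : |f x - m| = 0 := by rw [heq, sub_self, abs_zero]
          rw [hz, zero_div, hN.zero_s6, ENNReal.ofReal_zero]
          exact zero_le
        · have hmem : x ∈ {x | 0 < gp x} := by simp only [hhp, mem_setOf_eq]; linarith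
          have hnot : x ∉ {x | 0 < gm x} := by simp only [hhm, mem_setOf_eq, not_lt]; linarith
          rw [Set.indicator_of_mem hmem, Set.indicator_of_notMem hnot, add_zero]
      -- identify set integrals with gp / gm versions
      have hsetP : ∫⁻ x in {x | 0 < gp x}, ENNReal.ofReal (N (|f x - m| / v)) ∂μ
          = ∫⁻ x in {x | 0 < gp x}, ENNReal.ofReal (N (gp x / v)) ∂μ := by
        refine setLIntegral_congr_fun hmsP (fun x hx => ?_)
        have : |f x - m| = gp x := abs_of_pos hx
        rw [this]
      have hsetM : ∫⁻ x in {x | 0 < gm x}, ENNReal.ofReal (N (|f x - m| / v)) ∂μ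
          = ∫⁻ x in {x | 0 < gm x}, ENNReal.ofReal (N (gm x / v)) ∂μ := by
        refine setLIntegral_congr_fun hmsM (fun x hx => ?_)
        have h1 : f x - m < 0 := by
          have : (0:ℝ) < m - f x := hx
          linarith
        have : |f x - m| = gm x := by rw [abs_of_neg h1, hhm]; ring_nf
        rw [this]
      -- gradient set integrals in terms of f
      have hgrP : ∫⁻ x in {x | 0 < gp x}, (ENNReal.ofReal (gradNorm gp x)) ^ q ∂μ
          = ∫⁻ x in {x | 0 < gp x}, (ENNReal.ofReal (gradNorm f x)) ^ q ∂μ :=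
        lintegral_congr fun x => by rw [hhp, gradNorm_sub_const]
      have hgrM : ∫⁻ x in {x | 0 < gm x}, (ENNReal.ofReal (gradNorm gm x)) ^ q ∂μ
          = ∫⁻ x in {x | 0 < gm x}, (ENNReal.ofReal (gradNorm f x)) ^ q ∂μ :=
        lintegral_congr fun x => by rw [hhm, gradNorm_const_sub]
      -- disjointness
      have hdisj : Disjoint {x | 0 < gp x} {x | 0 < gm x} := by
        refine Set.disjoint_left.mpr fun x hx1 hx2 => ?_
        simp only [hhp, mem_setOf_eq] at hx1
        simp only [hhm, mem_setOf_eq] at hx2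
        linarith
      have hsumgr : (∫⁻ x in {x | 0 < gp x}, (ENNReal.ofReal (gradNorm f x)) ^ q ∂μ)
          + (∫⁻ x in {x | 0 < gm x}, (ENNReal.ofReal (gradNorm f x)) ^ q ∂μ) ≤ Etot := by
        rw [← lintegral_add_measure, ← Measure.restrict_union hdisj hmsM]
        exact lintegral_mono' Measure.restrict_le_self le_rfl
      -- final numeric bound
      have hnum : Kq * Etot ≤ 1 := by
        have hEGr : Gr ^ q = Etot.toReal := by
          rw [hGr, one_div, Real.rpow_inv_rpow ENNReal.toReal_nonneg hq0.ne']
        have hbase : 4 / (D₂ * θ * v) * Gr ≤ 1 := by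
          rw [div_mul_eq_mul_div, div_le_one (by positivity)]
          have h4 : Gr < D₂ * θ * v / 4 := hθG
          nlinarith [h4]
        have hreal : (4 / (D₂ * θ * v)) ^ q * Etot.toReal ≤ 1 := by
          rw [← hEGr, ← Real.mul_rpow (by positivity) hGrnn]
          exact Real.rpow_le_one (by positivity) hbase hq0.le
        calc Kq * Etot
            = ENNReal.ofReal ((4 / (D₂ * θ * v)) ^ q) * ENNReal.ofReal Etot.toReal := by
              rw [hKq, ENNReal.ofReal_toReal hEfin]
          _ = ENNReal.ofReal ((4 / (D₂ * θ * v)) ^ q * Etot.toReal) :=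
              (ENNReal.ofReal_mul (by positivity)).symm
          _ ≤ 1 := ENNReal.ofReal_le_one.2 hreal
      calc ∫⁻ x, ENNReal.ofReal (N (|f x - m| / v)) ∂μ
          ≤ ∫⁻ x, ({x | 0 < gp x}.indicator (fun x => ENNReal.ofReal (N (|f x - m| / v))) x
            + {x | 0 < gm x}.indicator (fun x => ENNReal.ofReal (N (|f x - m| / v))) x) ∂μ :=
            lintegral_mono hptw
        _ = (∫⁻ x in {x | 0 < gp x}, ENNReal.ofReal (N (|f x - m| / v)) ∂μ)
            + ∫⁻ x in {x | 0 < gm x}, ENNReal.ofReal (N (|f x - m| / v)) ∂μ := by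
            rw [lintegral_add_left (hImeas.indicator hmsP), lintegral_indicator hmsP,
              lintegral_indicator hmsM]
        _ ≤ Kq * (∫⁻ x in {x | 0 < gp x}, (ENNReal.ofReal (gradNorm f x)) ^ q ∂μ)
            + Kq * (∫⁻ x in {x | 0 < gm x}, (ENNReal.ofReal (gradNorm f x)) ^ q ∂μ) := by
            refine add_le_add ?_ ?_
            · rw [hsetP, ← hgrP]; exact hkeyP
            · rw [hsetM, ← hgrM]; exact hkeyM
        _ = Kq * ((∫⁻ x in {x | 0 < gp x}, (ENNReal.ofReal (gradNorm f x)) ^ q ∂μ)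
            + ∫⁻ x in {x | 0 < gm x}, (ENNReal.ofReal (gradNorm f x)) ^ q ∂μ) := by
            rw [mul_add]
        _ ≤ Kq * Etot := mul_le_mul_right hsumgr _
        _ ≤ 1 := hnum
    have hfinal : D₂ / 4 * orliczNorm μ N (fun x => f x - m) ≤ Gr := by
      calc D₂ / 4 * orliczNorm μ N (fun x => f x - m) ≤ D₂ / 4 * B :=
            mul_le_mul_of_nonneg_left horl (by positivity)
        _ = Gr := by rw [hB]; field_simp
    calc ENNReal.ofReal (D₂ / 4 * orliczNorm μ N fun x => f x - m)
        ≤ ENNReal.ofReal Gr := ENNReal.ofReal_le_ofReal hfinal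
      _ = Etot ^ (1/q) := hofGr
      _ = gradLqNorm μ (ENNReal.ofReal q) f := hgradeq.symm


end
end
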